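/- Assume that for some constant γ > 0 the following holds: for every abelian group G and every non-empty finite A ⊂ G with ΔH(A) ≤ γ there is a finite subgroup H of G with d(U_A, U_H) ≤ 12·ΔH(A). Then there exists θ > 0 such that for every ε ∈ (0, exp(-2)), every abelian group G, and every non-empty finite distributional ε-approximate group A ⊂ G, if 240·log(ε⁻¹|A|)·ε ≤ θ then there exists a finite subgroup H of G and x ∈ G with |A Δ (H+{x})| ≤ 240·log(ε⁻¹|A|)·ε·|H|. -/

import Mathlib

open Real
open scoped Pointwise symmDiff

/-- Shannon entropy of a (finitely supported) distribution, natural log,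
with the convention `0 * log 0 = 0`. -/
noncomputable def entropy {α : Type*} (p : α → ℝ) : ℝ :=
  -∑ᶠ x, p x * Real.log (p x)

/-- `p` is a finitely supported probability mass function. -/
def IsPMF {α : Type*} (p : α → ℝ) : Prop :=
  (∀ x, 0 ≤ p x) ∧ (Function.support p).Finite ∧ ∑ᶠ x, p x = 1

/-- Distribution of `X + Y` for independent `X ~ p`, `Y ~ q`. -/
noncomputable def conv {G : Type*} [AddCommGroup G] (p q : G → ℝ) : G → ℝ :=
  fun z => ∑ᶠ x, p x * q (z - x)

/-- The uniform distribution on a set `A`. -/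
noncomputable def uniformSet {G : Type*} (A : Set G) : G → ℝ :=
  A.indicator fun _ => 1 / A.ncard

/-- Entropic Ruzsa distance between two distributions. -/
noncomputable def rdist {G : Type*} [AddCommGroup G] (p q : G → ℝ) : ℝ :=
  entropy (conv p q) - (entropy p + entropy q) / 2

/-- Probability of an event under distribution `p`. -/
noncomputable def probOf {α : Type*} (p : α → ℝ) (S : Set α) : ℝ :=
  ∑ᶠ x ∈ S, p x

/-- `A` is a distributional ε-approximate group. -/
def IsDistribApproxGroup {G : Type*} [AddCommGroup G] (ε : ℝ) (A : Set G) : Prop :=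
  ∃ U : Set G, U.ncard = A.ncard ∧
    (1 - ε) * (A.ncard : ℝ) ^ 2 ≤
      ({p : G × G | p.1 ∈ A ∧ p.2 ∈ A ∧ p.1 + p.2 ∈ U}.ncard : ℝ)

section Helpers
variable {α : Type*}

lemma entropy_eq_sum (p : α → ℝ) (s : Finset α) (h : Function.support p ⊆ s) :
    entropy p = ∑ x ∈ s, p x * Real.log (p x)⁻¹ := by
  have h2 : Function.support (fun x => p x * Real.log (p x)) ⊆ s := by
    intro x hx
    apply h
    intro h0
    simp [Function.mem_support, h0] at hx
  rw [entropy, finsum_eq_sum_of_support_subset _ h2, ← Finset.sum_neg_distrib]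
  refine Finset.sum_congr rfl fun x _ => ?_
  rw [Real.log_inv]; ring

lemma sum_mul_log_inv_le (t : Finset α) (w : α → ℝ) (hw : ∀ i ∈ t, 0 ≤ w i)
    (n : ℝ) (hn : (t.card : ℝ) ≤ n) :
    ∑ i ∈ t, w i * Real.log (w i)⁻¹ ≤
      (∑ i ∈ t, w i) * Real.log n - (∑ i ∈ t, w i) * Real.log (∑ i ∈ t, w i) := by
  classical
  set W := ∑ i ∈ t, w i with hW
  have hW0 : 0 ≤ W := Finset.sum_nonneg hw
  rcases eq_or_lt_of_le hW0 with h0 | hWpos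
  · have : ∀ i ∈ t, w i = 0 := by
      intro i hi
      exact (Finset.sum_eq_zero_iff_of_nonneg hw).1 h0.symm i hi
    rw [← h0]
    simp only [zero_mul, sub_zero, zero_sub, neg_zero]
    refine le_of_eq (Finset.sum_eq_zero fun i hi => by rw [this i hi]; simp)
  · set t' := t.filter (fun i => w i ≠ 0) with ht'
    have hWt' : ∑ i ∈ t', w i = W := by
      rw [hW, ht']
      exact Finset.sum_filter_ne_zero t
    have hwpos : ∀ i ∈ t', 0 < w i := by
      intro i hi
      rw [ht', Finset.mem_filter] at hi
      exact lt_of_le_of_ne (hw i hi.1) (Ne.symm hi.2)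
    have ht'ne : t'.Nonempty := by
      by_contra hne
      rw [Finset.not_nonempty_iff_eq_empty] at hne
      rw [← hWt', hne, Finset.sum_empty] at hWpos
      exact lt_irrefl 0 hWpos
    have hcard' : (0:ℝ) < t'.card := by exact_mod_cast Finset.card_pos.2 ht'ne
    have hcard'n : (t'.card : ℝ) ≤ n := le_trans (by exact_mod_cast Finset.card_le_card (Finset.filter_subset _ t)) hn
    -- Jensen
    have hjensen := (strictConcaveOn_log_Ioi.concaveOn).le_map_sum
      (t := t') (w := fun i => w i / W) (p := fun i => (w i)⁻¹)
      (fun i hi => div_nonneg (hwpos i hi).le hWpos.le)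
      (by rw [← Finset.sum_div, hWt', div_self hWpos.ne'])
      (fun i hi => Set.mem_Ioi.2 (inv_pos.2 (hwpos i hi)))
    have hsum_pts : ∑ i ∈ t', (w i / W) • (w i)⁻¹ = t'.card / W := by
      have hc : ∀ i ∈ t', (w i / W) • (w i)⁻¹ = W⁻¹ := by
        intro i hi
        have := (hwpos i hi).ne'
        rw [smul_eq_mul]
        field_simp
      rw [Finset.sum_congr rfl hc, Finset.sum_const, nsmul_eq_mul]
      ring
    rw [hsum_pts] at hjensen
    have hLHS : ∑ i ∈ t, w i * Real.log (w i)⁻¹ = ∑ i ∈ t', w i * Real.log (w i)⁻¹ := by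
      rw [ht']
      refine (Finset.sum_filter_of_ne fun i hi hne => ?_).symm
      intro h0
      rw [h0] at hne; simp at hne
    calc ∑ i ∈ t, w i * Real.log (w i)⁻¹
        = W * ∑ i ∈ t', (w i / W) • Real.log (w i)⁻¹ := by
          rw [hLHS, Finset.mul_sum]
          refine Finset.sum_congr rfl fun i hi => ?_
          rw [smul_eq_mul]
          field_simp
      _ ≤ W * Real.log (t'.card / W) := by
          apply mul_le_mul_of_nonneg_left hjensen hW0
      _ = W * Real.log t'.card - W * Real.log W := by
          rw [Real.log_div hcard'.ne' hWpos.ne']; ring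
      _ ≤ W * Real.log n - W * Real.log W := by
          have := Real.log_le_log hcard' hcard'n
          nlinarith

lemma neg_log_le_entropy (p : α → ℝ) (s : Finset α) (hsupp : Function.support p ⊆ s)
    (h0 : ∀ x, 0 ≤ p x) (h1 : ∑ x ∈ s, p x = 1) {c : ℝ} (hc : 0 < c)
    (hpc : ∀ x, p x ≤ c) : Real.log c⁻¹ ≤ entropy p := by
  rw [entropy_eq_sum p s hsupp]
  calc Real.log c⁻¹ = ∑ x ∈ s, p x * Real.log c⁻¹ := by rw [← Finset.sum_mul, h1, one_mul]
    _ ≤ ∑ x ∈ s, p x * Real.log (p x)⁻¹ := by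
        refine Finset.sum_le_sum fun x _ => ?_
        rcases eq_or_lt_of_le (h0 x) with h | h
        · rw [← h]; simp
        · refine mul_le_mul_of_nonneg_left ?_ (h0 x)
          exact Real.log_le_log (inv_pos.2 hc) (one_div c ▸ (inv_anti₀ h (hpc x)))

lemma entropy_le_split [DecidableEq α] (p : α → ℝ) (s u : Finset α) (hsupp : Function.support p ⊆ s)
    (h0 : ∀ x, 0 ≤ p x) (n₁ n₂ : ℝ) (hn₁ : ((s ∩ u).card : ℝ) ≤ n₁)
    (hn₂ : (((s \ u) : Finset α).card : ℝ) ≤ n₂) :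
    entropy p ≤
      ((∑ x ∈ s ∩ u, p x) * Real.log n₁ - (∑ x ∈ s ∩ u, p x) * Real.log (∑ x ∈ s ∩ u, p x))
      + ((∑ x ∈ s \ u, p x) * Real.log n₂ - (∑ x ∈ s \ u, p x) * Real.log (∑ x ∈ s \ u, p x)) := by
  classical
  rw [entropy_eq_sum p s hsupp,
    ← Finset.sum_inter_add_sum_sdiff s u (fun x => p x * Real.log (p x)⁻¹)]
  exact add_le_add
    (sum_mul_log_inv_le _ p (fun i _ => h0 i) n₁ hn₁)
    (sum_mul_log_inv_le _ p (fun i _ => h0 i) n₂ hn₂)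

end Helpers

section Group
variable {G : Type*} [AddCommGroup G] {A B : Set G}

lemma uniformSet_nonneg (A : Set G) (x : G) : 0 ≤ uniformSet A x := by
  unfold uniformSet
  exact Set.indicator_nonneg (fun _ _ => by positivity) x

lemma support_uniformSet (A : Set G) : Function.support (uniformSet A) ⊆ A :=
  Set.support_indicator_subset

lemma entropy_uniform (hA : A.Finite) (h0 : A.Nonempty) :
    entropy (uniformSet A) = Real.log A.ncard := by
  have hcard : (0:ℝ) < A.ncard := by
    exact_mod_cast (Set.ncard_pos hA).2 h0
  rw [entropy_eq_sum (uniformSet A) hA.toFinset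
    (fun x hx => hA.mem_toFinset.2 (support_uniformSet A hx))]
  have : ∀ x ∈ hA.toFinset, uniformSet A x * Real.log (uniformSet A x)⁻¹
      = ((A.ncard : ℝ))⁻¹ * Real.log A.ncard := by
    intro x hx
    rw [Set.Finite.mem_toFinset] at hx
    rw [uniformSet, Set.indicator_of_mem hx, one_div, inv_inv]
  rw [Finset.sum_congr rfl this, Finset.sum_const, nsmul_eq_mul]
  have hc : (hA.toFinset.card : ℝ) = A.ncard := by
    rw [Set.ncard_eq_toFinset_card A hA]
  rw [hc]
  field_simp

lemma ncard_inter_eq (hA : A.Finite) (P : G → Prop) [DecidablePred P] :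
    (A ∩ {x | P x}).ncard = (hA.toFinset.filter P).card := by
  rw [← Set.ncard_coe_finset]
  congr 1
  ext x
  simp

lemma conv_uniform_apply (hA : A.Finite) (B : Set G) (z : G) :
    conv (uniformSet A) (uniformSet B) z
      = ((A ∩ {x | z - x ∈ B}).ncard : ℝ) / (A.ncard * B.ncard) := by
  classical
  have hsupp : Function.support (fun x => uniformSet A x * uniformSet B (z - x)) ⊆ hA.toFinset := by
    intro x hx
    rw [Function.mem_support] at hx
    rw [Finset.mem_coe, Set.Finite.mem_toFinset]
    by_contra hxA
    rw [uniformSet, Set.indicator_of_notMem hxA, zero_mul] at hx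
    exact hx rfl
  rw [conv, finsum_eq_sum_of_support_subset _ hsupp]
  have h1 : ∀ x ∈ hA.toFinset, uniformSet A x * uniformSet B (z - x)
      = if z - x ∈ B then ((A.ncard:ℝ))⁻¹ * ((B.ncard:ℝ))⁻¹ else 0 := by
    intro x hx
    rw [Set.Finite.mem_toFinset] at hx
    rw [uniformSet, uniformSet, Set.indicator_of_mem hx]
    by_cases hb : z - x ∈ B
    · rw [if_pos hb, Set.indicator_of_mem hb, one_div, one_div]
    · rw [if_neg hb, Set.indicator_of_notMem hb, mul_zero]
  rw [Finset.sum_congr rfl h1, ← Finset.sum_filter, Finset.sum_const, nsmul_eq_mul,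
    ncard_inter_eq hA (fun x => z - x ∈ B)]
  ring

lemma sum_conv_eq (hA : A.Finite) (hB : B.Finite) (s : Finset G) :
    ∑ z ∈ s, conv (uniformSet A) (uniformSet B) z
      = (({p : G × G | p.1 ∈ A ∧ p.2 ∈ B ∧ p.1 + p.2 ∈ (↑s : Set G)}).ncard : ℝ)
          / (A.ncard * B.ncard) := by
  classical
  have h1 : ∀ z ∈ s, conv (uniformSet A) (uniformSet B) z
      = ((A ∩ {x | z - x ∈ B}).ncard : ℝ) / (A.ncard * B.ncard) :=
    fun z _ => conv_uniform_apply hA B z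
  rw [Finset.sum_congr rfl h1, ← Finset.sum_div]
  congr 1
  set pf := (hA.toFinset ×ˢ hB.toFinset).filter (fun p => p.1 + p.2 ∈ s) with hpf
  have hset : {p : G × G | p.1 ∈ A ∧ p.2 ∈ B ∧ p.1 + p.2 ∈ (↑s : Set G)} = ↑pf := by
    ext ⟨a, b⟩
    simp [hpf, Set.Finite.mem_toFinset, and_assoc]
  rw [hset, Set.ncard_coe_finset]
  rw [Finset.card_eq_sum_card_fiberwise (f := fun p : G × G => p.1 + p.2) (s := pf) (t := s)
    (fun p hp => (Finset.mem_filter.1 (Finset.mem_coe.1 hp)).2)]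
  push_cast
  refine Finset.sum_congr rfl fun z hz => ?_
  rw [ncard_inter_eq hA (fun x => z - x ∈ B)]
  congr 1
  refine (Finset.card_bij (fun (p : G × G) _ => p.1) ?_ ?_ ?_).symm
  · rintro ⟨a, b⟩ hp
    simp only [Finset.mem_filter, Finset.mem_product, Set.Finite.mem_toFinset, hpf] at hp ⊢
    obtain ⟨⟨⟨ha, hb⟩, _⟩, hsum⟩ := hp
    refine ⟨ha, ?_⟩
    rw [← hsum]
    simpa using hb
  · rintro ⟨a, b⟩ hp ⟨a', b'⟩ hp' h
    simp only [Finset.mem_filter, hpf] at hp hp'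
    simp only at h
    subst h
    have hbb : b = b' := add_left_cancel (hp.2.trans hp'.2.symm)
    rw [hbb]
  · intro x hx
    simp only [Finset.mem_filter, Set.Finite.mem_toFinset] at hx
    have hzx : x + (z - x) = z := by abel
    refine ⟨(x, z - x), Finset.mem_filter.2 ⟨Finset.mem_filter.2
      ⟨Finset.mem_product.2 ⟨?_, ?_⟩, ?_⟩, ?_⟩, rfl⟩
    · exact hA.mem_toFinset.2 hx.1
    · exact hB.mem_toFinset.2 hx.2
    · show x + (z - x) ∈ s
      rw [hzx]; exact hz
    · exact hzx

end Group

section Group2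
variable {G : Type*} [AddCommGroup G] [DecidableEq G] {A B : Set G}

lemma conv_uniform_nonneg (hA : A.Finite) (B : Set G) (z : G) :
    0 ≤ conv (uniformSet A) (uniformSet B) z := by
  rw [conv_uniform_apply hA B z]
  positivity

lemma support_conv_subset (hA : A.Finite) (hB : B.Finite) :
    Function.support (conv (uniformSet A) (uniformSet B))
      ⊆ ↑(hA.toFinset + hB.toFinset) := by
  intro z hz
  rw [Function.mem_support, conv_uniform_apply hA B z] at hz
  have hnum : (A ∩ {x | z - x ∈ B}).ncard ≠ 0 := by
    intro h0
    rw [h0] at hz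
    simp at hz
  obtain ⟨x, hxA, hxB⟩ := Set.nonempty_of_ncard_ne_zero hnum
  rw [Finset.mem_coe, Finset.mem_add]
  exact ⟨x, hA.mem_toFinset.2 hxA, z - x, hB.mem_toFinset.2 hxB, by abel⟩

lemma sum_conv_total (hA : A.Finite) (hB : B.Finite) (hA0 : A.Nonempty) (hB0 : B.Nonempty) :
    ∑ z ∈ hA.toFinset + hB.toFinset, conv (uniformSet A) (uniformSet B) z = 1 := by
  rw [sum_conv_eq hA hB]
  have hset : {p : G × G | p.1 ∈ A ∧ p.2 ∈ B ∧ p.1 + p.2 ∈ (↑(hA.toFinset + hB.toFinset) : Set G)}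
      = ↑(hA.toFinset ×ˢ hB.toFinset) := by
    ext ⟨a, b⟩
    simp only [Set.mem_setOf_eq, Finset.coe_product, Set.mem_prod, Set.Finite.coe_toFinset,
      Finset.mem_coe]
    constructor
    · rintro ⟨ha, hb, _⟩; exact ⟨ha, hb⟩
    · rintro ⟨ha, hb⟩
      exact ⟨ha, hb, Finset.add_mem_add (hA.mem_toFinset.2 ha) (hB.mem_toFinset.2 hb)⟩
  rw [hset, Set.ncard_coe_finset, Finset.card_product]
  have h1 : (hA.toFinset.card : ℝ) = A.ncard := by rw [Set.ncard_eq_toFinset_card A hA]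
  have h2 : (hB.toFinset.card : ℝ) = B.ncard := by rw [Set.ncard_eq_toFinset_card B hB]
  have hA0' : (0:ℝ) < A.ncard := by exact_mod_cast (Set.ncard_pos hA).2 hA0
  have hB0' : (0:ℝ) < B.ncard := by exact_mod_cast (Set.ncard_pos hB).2 hB0
  push_cast
  rw [h1, h2]
  field_simp

end Group2

universe u

set_option maxHeartbeats 2000000 in
theorem main_theorem_from_black_box (γ : ℝ) (hγ : 0 < γ)
    (blackbox : ∀ (G : Type u) [AddCommGroup G] (A : Set G), A.Finite → A.Nonempty →
      entropy (conv (uniformSet A) (uniformSet A)) - entropy (uniformSet A) ≤ γ →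
      ∃ H : AddSubgroup G, (H : Set G).Finite ∧
        rdist (uniformSet A) (uniformSet (H : Set G)) ≤
          12 * (entropy (conv (uniformSet A) (uniformSet A)) - entropy (uniformSet A))) :
    ∃ θ : ℝ, 0 < θ ∧
      ∀ (G : Type u) [AddCommGroup G] (ε : ℝ), 0 < ε → ε < Real.exp (-2) →
        ∀ A : Set G, A.Finite → A.Nonempty → IsDistribApproxGroup ε A →
          240 * Real.log (ε⁻¹ * A.ncard) * ε ≤ θ →
          ∃ (H : AddSubgroup G) (x : G), (H : Set G).Finite ∧
            ((A ∆ ((H : Set G) + {x})).ncard : ℝ)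
              ≤ 240 * Real.log (ε⁻¹ * A.ncard) * ε * (H : Set G).ncard := by
  classical
  refine ⟨min 1 (100 * γ), lt_min one_pos (by positivity), ?_⟩
  intro G _ ε hε0 hεe A hA hA0 hApprox hKθ
  obtain ⟨U, hUcard, hUpairs⟩ := hApprox
  -- basic numerology
  have hnA : 0 < A.ncard := (Set.ncard_pos hA).2 hA0
  have hrA1 : (1:ℝ) ≤ (A.ncard : ℝ) := by exact_mod_cast hnA
  have hrA0 : (0:ℝ) < (A.ncard : ℝ) := by linarith
  have hε1 : ε < 1 := lt_trans hεe (by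
    rw [← Real.exp_zero]
    exact Real.exp_lt_exp.2 (by norm_num))
  have hlogε : 2 < Real.log ε⁻¹ := by
    have h := Real.log_lt_log hε0 hεe
    rw [Real.log_exp] at h
    rw [Real.log_inv]
    linarith
  have hlogrA : 0 ≤ Real.log (A.ncard : ℝ) := Real.log_nonneg hrA1
  have hLsplit : Real.log (ε⁻¹ * (A.ncard : ℝ)) = Real.log ε⁻¹ + Real.log (A.ncard : ℝ) :=
    Real.log_mul (by positivity) (by positivity)
  have hL2 : 2 < Real.log (ε⁻¹ * (A.ncard : ℝ)) := by rw [hLsplit]; linarith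
  set L : ℝ := Real.log (ε⁻¹ * (A.ncard : ℝ)) with hLdef
  set K : ℝ := 240 * L * ε with hKdef
  have hK0 : 0 < K := by
    have : 0 < L := by linarith
    positivity
  have hK1 : K ≤ 1 := le_trans hKθ (min_le_left _ _)
  have hKγ : K ≤ 100 * γ := le_trans hKθ (min_le_right _ _)
  -- Step B : entropy increment bound
  have hUfin : U.Finite := by
    apply Set.finite_of_ncard_ne_zero
    rw [hUcard]
    omega
  have hΔ : entropy (conv (uniformSet A) (uniformSet A)) - entropy (uniformSet A)
      ≤ 2 * ε * L := by
    have hEA : entropy (uniformSet A) = Real.log (A.ncard : ℝ) := entropy_uniform hA hA0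
    set s : Finset G := hA.toFinset + hA.toFinset with hsdef
    set u : Finset G := hUfin.toFinset with hudef
    set q : G → ℝ := conv (uniformSet A) (uniformSet A) with hqdef
    have hqnn : ∀ z, 0 ≤ q z := conv_uniform_nonneg hA A
    have hsupp : Function.support q ⊆ ↑s := support_conv_subset hA hA
    have hsum1 : ∑ z ∈ s, q z = 1 := sum_conv_total hA hA hA0 hA0
    set W₁ : ℝ := ∑ z ∈ s ∩ u, q z with hW₁def
    set W₂ : ℝ := ∑ z ∈ s \ u, q z with hW₂def
    have hWsplit : W₁ + W₂ = 1 := by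
      rw [hW₁def, hW₂def, Finset.sum_inter_add_sum_sdiff]
      exact hsum1
    have hW2nn : 0 ≤ W₂ := Finset.sum_nonneg fun z _ => hqnn z
    have hW1u : W₁ = ∑ z ∈ u, q z := by
      have h0 : ∑ z ∈ u \ s, q z = 0 := by
        refine Finset.sum_eq_zero fun z hz => ?_
        rw [Finset.mem_sdiff] at hz
        by_contra hq0
        exact hz.2 (by exact_mod_cast hsupp hq0)
      have h5 := Finset.sum_inter_add_sum_sdiff u s q
      rw [h0, add_zero] at h5
      rw [hW₁def, Finset.inter_comm, h5]
    have hW1ge : 1 - ε ≤ W₁ := by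
      rw [hW1u, hqdef, sum_conv_eq hA hA u]
      have hcoe : (↑u : Set G) = U := hUfin.coe_toFinset
      rw [hcoe]
      rw [le_div_iff₀ (by positivity)]
      calc (1 - ε) * ((A.ncard : ℝ) * (A.ncard : ℝ)) = (1 - ε) * (A.ncard : ℝ) ^ 2 := by ring
        _ ≤ _ := hUpairs
    have hW2ε : W₂ ≤ ε := by linarith
    have hW1pos : 0 < W₁ := by linarith
    have hcard_su : (((s ∩ u).card : ℕ) : ℝ) ≤ (A.ncard : ℝ) := by
      have h1 : (s ∩ u).card ≤ u.card := Finset.card_le_card (Finset.inter_subset_right)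
      have h2 : u.card = A.ncard := by
        rw [hudef, ← Set.ncard_eq_toFinset_card U hUfin, hUcard]
      exact_mod_cast h1.trans_eq h2
    have hcard_sd : (((s \ u).card : ℕ) : ℝ) ≤ (A.ncard : ℝ) ^ 2 := by
      have h1 : (s \ u).card ≤ s.card := Finset.card_le_card (Finset.sdiff_subset)
      have h2 : s.card ≤ A.ncard * A.ncard := by
        rw [hsdef]
        have := Finset.card_add_le (s := hA.toFinset) (t := hA.toFinset)
        rwa [← Set.ncard_eq_toFinset_card A hA] at this
      have : (s \ u).card ≤ A.ncard * A.ncard := h1.trans h2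
      calc (((s \ u).card : ℕ) : ℝ) ≤ ((A.ncard * A.ncard : ℕ) : ℝ) := by exact_mod_cast this
        _ = (A.ncard : ℝ) ^ 2 := by push_cast; ring
    have hent := entropy_le_split q s u hsupp hqnn ((A.ncard : ℝ)) ((A.ncard : ℝ) ^ 2)
      hcard_su hcard_sd
    rw [← hW₁def, ← hW₂def] at hent
    have hlogsq : Real.log ((A.ncard : ℝ) ^ 2) = 2 * Real.log (A.ncard : ℝ) := by
      rw [Real.log_pow]; push_cast; ring
    rw [hlogsq] at hent
    -- scalar inequalities
    have hlogW1 : -(W₁ * Real.log W₁) ≤ 1 - W₁ := by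
      have h := Real.log_le_sub_one_of_pos (inv_pos.2 hW1pos)
      rw [Real.log_inv] at h
      have h2 : W₁ * (-Real.log W₁) ≤ W₁ * (W₁⁻¹ - 1) :=
        mul_le_mul_of_nonneg_left h hW1pos.le
      have h3 : W₁ * W₁⁻¹ = 1 := mul_inv_cancel₀ hW1pos.ne'
      have h4 : W₁ * (W₁⁻¹ - 1) = 1 - W₁ := by rw [mul_sub, h3]; ring
      linarith
    have hlogW2 : -(W₂ * Real.log W₂) ≤ ε + ε * Real.log ε⁻¹ := by
      rcases eq_or_lt_of_le hW2nn with h0 | hW2pos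
      · rw [← h0]
        simp only [neg_zero, zero_mul]
        have : 0 ≤ ε * Real.log ε⁻¹ := mul_nonneg hε0.le (by linarith)
        linarith
      · have hsplit2 : Real.log W₂⁻¹ = Real.log (ε / W₂) + Real.log ε⁻¹ := by
          rw [← Real.log_mul (by positivity) (by positivity)]
          congr 1
          field_simp
        have hle1 : Real.log (ε / W₂) ≤ ε / W₂ - 1 :=
          Real.log_le_sub_one_of_pos (by positivity)
        have hw2a : W₂ * (ε / W₂) = ε := by field_simp
        have h2 : W₂ * Real.log (ε / W₂) ≤ ε - W₂ := by
          have ha := mul_le_mul_of_nonneg_left hle1 hW2pos.le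
          have hb : W₂ * (ε / W₂ - 1) = ε - W₂ := by rw [mul_sub, hw2a]; ring
          linarith
        have h3 : W₂ * Real.log ε⁻¹ ≤ ε * Real.log ε⁻¹ :=
          mul_le_mul_of_nonneg_right hW2ε (by linarith)
        have h4 : -(W₂ * Real.log W₂) = W₂ * Real.log W₂⁻¹ := by
          rw [Real.log_inv]; ring
        rw [h4, hsplit2, mul_add]
        linarith
    have hsum_coef : W₁ * Real.log (A.ncard : ℝ) + W₂ * (2 * Real.log (A.ncard : ℝ))
        ≤ (1 + ε) * Real.log (A.ncard : ℝ) := by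
      have hc : W₁ + 2 * W₂ ≤ 1 + ε := by linarith
      have := mul_le_mul_of_nonneg_right hc hlogrA
      nlinarith [this]
    have hfinal : entropy q ≤ (1 + ε) * Real.log (A.ncard : ℝ) + (1 - W₁)
        + (ε + ε * Real.log ε⁻¹) := by linarith
    rw [hEA]
    have h1W1 : 1 - W₁ ≤ ε := by linarith
    have h2ε : 2 * ε ≤ ε * Real.log ε⁻¹ := by
      have := mul_le_mul_of_nonneg_left hlogε.le hε0.le
      linarith
    have hLspl : L = Real.log ε⁻¹ + Real.log (A.ncard : ℝ) := hLsplit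
    have hεL : ε * L = ε * Real.log ε⁻¹ + ε * Real.log (A.ncard : ℝ) := by
      rw [hLspl]; ring
    have hεlogrA : 0 ≤ ε * Real.log (A.ncard : ℝ) := mul_nonneg hε0.le hlogrA
    linarith
  have hΔγ : entropy (conv (uniformSet A) (uniformSet A)) - entropy (uniformSet A) ≤ γ := by
    have h1 : 2 * ε * L = K / 120 := by rw [hKdef]; ring
    linarith
  obtain ⟨H, hHfin, hrd⟩ := blackbox G A hA hA0 hΔγ
  have hrdK : rdist (uniformSet A) (uniformSet (H : Set G)) ≤ K / 10 := by
    have h1 : 2 * ε * L = K / 120 := by rw [hKdef]; ring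
    linarith
  -- Step C : from small Ruzsa distance to symmetric difference
  have hH0 : (H : Set G).Nonempty := ⟨0, H.zero_mem⟩
  have hm : 0 < (H : Set G).ncard := (Set.ncard_pos hHfin).2 hH0
  have hrm1 : (1:ℝ) ≤ ((H : Set G).ncard : ℝ) := by exact_mod_cast hm
  have hrm0 : (0:ℝ) < ((H : Set G).ncard : ℝ) := by linarith
  have hEA2 : entropy (uniformSet A) = Real.log (A.ncard : ℝ) := entropy_uniform hA hA0
  have hEH : entropy (uniformSet (H : Set G)) = Real.log (((H : Set G)).ncard : ℝ) :=
    entropy_uniform hHfin hH0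
  have hq2top : entropy (conv (uniformSet A) (uniformSet (H : Set G)))
      ≤ K / 10 + (Real.log (A.ncard : ℝ) + Real.log (((H : Set G)).ncard : ℝ)) / 2 := by
    rw [rdist, hEA2, hEH] at hrdK
    linarith
  -- the fiber counts
  have hfin_inter : ∀ z : G, (A ∩ {x | z - x ∈ (H : Set G)}).Finite :=
    fun z => hA.inter_of_left _
  have hFA : ∀ z : G, (A ∩ {x | z - x ∈ (H : Set G)}).ncard ≤ A.ncard :=
    fun z => Set.ncard_le_ncard Set.inter_subset_left hA
  have hFH : ∀ z : G, (A ∩ {x | z - x ∈ (H : Set G)}).ncard ≤ (H : Set G).ncard := by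
    intro z
    have himg : {x | z - x ∈ (H : Set G)} = (fun h => z - h) '' (H : Set G) := by
      ext x
      simp only [Set.mem_setOf_eq, Set.mem_image]
      constructor
      · intro hx; exact ⟨z - x, hx, by abel⟩
      · rintro ⟨h, hh, rfl⟩
        simpa [sub_sub_cancel] using hh
    calc (A ∩ {x | z - x ∈ (H : Set G)}).ncard
        ≤ ({x | z - x ∈ (H : Set G)}).ncard :=
          Set.ncard_le_ncard Set.inter_subset_right (by rw [himg]; exact hHfin.image _)
      _ = ((fun h => z - h) '' (H : Set G)).ncard := by rw [himg]
      _ ≤ (H : Set G).ncard := Set.ncard_image_le hHfin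
  -- the maximal fiber
  obtain ⟨a₀, ha₀A, ha₀max⟩ := Finset.exists_max_image hA.toFinset
    (fun a => (A ∩ {x | a - x ∈ (H : Set G)}).ncard) (hA.toFinset_nonempty.2 hA0)
  have ha₀A' : a₀ ∈ A := hA.mem_toFinset.1 ha₀A
  set N : ℕ := (A ∩ {x | a₀ - x ∈ (H : Set G)}).ncard with hNdef
  have hN1 : 1 ≤ N := by
    have hmem : a₀ ∈ A ∩ {x | a₀ - x ∈ (H : Set G)} :=
      ⟨ha₀A', by simp [Set.mem_setOf_eq, sub_self, AddSubgroup.zero_mem]⟩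
    have := (Set.ncard_pos (hfin_inter a₀)).2 ⟨a₀, hmem⟩
    omega
  have hFN : ∀ z : G, (A ∩ {x | z - x ∈ (H : Set G)}).ncard ≤ N := by
    intro z
    rcases Nat.eq_zero_or_pos ((A ∩ {x | z - x ∈ (H : Set G)}).ncard) with h0 | hpos
    · omega
    · have hne : (A ∩ {x | z - x ∈ (H : Set G)}).Nonempty :=
        Set.nonempty_of_ncard_ne_zero (by omega)
      obtain ⟨a, haA, haH⟩ := hne
      have haH' : z - a ∈ H := haH
      have hEqSet : {x | z - x ∈ (H : Set G)} = {x | a - x ∈ (H : Set G)} := by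
        ext x
        simp only [Set.mem_setOf_eq]
        have haz : a - z ∈ H := by
          have := H.neg_mem haH'
          simpa [neg_sub] using this
        constructor
        · intro hx
          have := H.add_mem haz hx
          simpa [sub_add_sub_cancel] using this
        · intro hx
          have := H.add_mem haH' hx
          simpa [sub_add_sub_cancel] using this
      rw [hEqSet]
      exact ha₀max a (hA.mem_toFinset.2 haA)
  have hrN0 : (0:ℝ) < (N : ℝ) := by exact_mod_cast hN1
  -- pointwise bounds and entropy lower bounds
  have hpt : ∀ z, conv (uniformSet A) (uniformSet (H : Set G)) z
      = ((A ∩ {x | z - x ∈ (H : Set G)}).ncard : ℝ)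
          / ((A.ncard : ℝ) * ((H : Set G).ncard : ℝ)) :=
    fun z => conv_uniform_apply hA _ z
  have hbound : ∀ c : ℝ, 0 < c →
      (∀ z, conv (uniformSet A) (uniformSet (H : Set G)) z ≤ c) →
      Real.log c⁻¹ ≤ entropy (conv (uniformSet A) (uniformSet (H : Set G))) :=
    fun c hc hpc => neg_log_le_entropy _ _ (support_conv_subset hA hHfin)
      (conv_uniform_nonneg hA _) (sum_conv_total hA hHfin hA0 hH0) hc hpc
  have hprod0 : (0:ℝ) < (A.ncard : ℝ) * ((H : Set G).ncard : ℝ) := by positivity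
  have hE1 : Real.log ((H : Set G).ncard : ℝ)
      ≤ entropy (conv (uniformSet A) (uniformSet (H : Set G))) := by
    have := hbound (((H : Set G).ncard : ℝ))⁻¹ (by positivity) (fun z => by
      rw [hpt z, div_le_iff₀ hprod0]
      have h1 : ((A ∩ {x | z - x ∈ (H : Set G)}).ncard : ℝ) ≤ (A.ncard : ℝ) := by
        exact_mod_cast hFA z
      calc ((A ∩ {x | z - x ∈ (H : Set G)}).ncard : ℝ) ≤ (A.ncard : ℝ) := h1
        _ = (((H : Set G).ncard : ℝ))⁻¹ * ((A.ncard : ℝ) * ((H : Set G).ncard : ℝ)) := by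
            field_simp)
    rwa [inv_inv] at this
  have hE2 : Real.log (A.ncard : ℝ)
      ≤ entropy (conv (uniformSet A) (uniformSet (H : Set G))) := by
    have := hbound (((A.ncard : ℝ)))⁻¹ (by positivity) (fun z => by
      rw [hpt z, div_le_iff₀ hprod0]
      have h1 : ((A ∩ {x | z - x ∈ (H : Set G)}).ncard : ℝ) ≤ (((H : Set G)).ncard : ℝ) := by
        exact_mod_cast hFH z
      calc ((A ∩ {x | z - x ∈ (H : Set G)}).ncard : ℝ) ≤ (((H : Set G)).ncard : ℝ) := h1
        _ = ((A.ncard : ℝ))⁻¹ * ((A.ncard : ℝ) * ((H : Set G).ncard : ℝ)) := by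
            field_simp)
    rwa [inv_inv] at this
  have hE3 : Real.log (A.ncard : ℝ) + Real.log (((H : Set G)).ncard : ℝ) - Real.log (N : ℝ)
      ≤ entropy (conv (uniformSet A) (uniformSet (H : Set G))) := by
    have hc0 : (0:ℝ) < (N : ℝ) / ((A.ncard : ℝ) * ((H : Set G).ncard : ℝ)) := by positivity
    have := hbound _ hc0 (fun z => by
      rw [hpt z]
      exact (div_le_div_iff_of_pos_right hprod0).2 (by exact_mod_cast hFN z))
    have hinv : ((N : ℝ) / ((A.ncard : ℝ) * ((H : Set G).ncard : ℝ)))⁻¹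
        = ((A.ncard : ℝ) * ((H : Set G).ncard : ℝ)) / (N : ℝ) := by rw [inv_div]
    rw [hinv, Real.log_div hprod0.ne' hrN0.ne', Real.log_mul hrA0.ne' hrm0.ne'] at this
    linarith
  -- log comparisons
  have hab1 : Real.log (A.ncard : ℝ) - Real.log (((H : Set G)).ncard : ℝ) ≤ K / 5 := by
    linarith
  have hab2 : Real.log (((H : Set G)).ncard : ℝ) - Real.log (A.ncard : ℝ) ≤ K / 5 := by
    linarith
  have hlogN1 : Real.log (A.ncard : ℝ) - K / 5 ≤ Real.log (N : ℝ) := by linarith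
  have hlogN2 : Real.log (((H : Set G)).ncard : ℝ) - K / 5 ≤ Real.log (N : ℝ) := by linarith
  -- exponentiate
  have hNA : (A.ncard : ℝ) * Real.exp (-(K/5)) ≤ (N : ℝ) := by
    have h := Real.exp_le_exp.2 hlogN1
    rw [Real.exp_log hrN0] at h
    calc (A.ncard : ℝ) * Real.exp (-(K/5))
        = Real.exp (Real.log (A.ncard : ℝ) - K/5) := by
          rw [sub_eq_add_neg, Real.exp_add, Real.exp_log hrA0]
      _ ≤ (N : ℝ) := h
  have hNm : (((H : Set G)).ncard : ℝ) * Real.exp (-(K/5)) ≤ (N : ℝ) := by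
    have h := Real.exp_le_exp.2 hlogN2
    rw [Real.exp_log hrN0] at h
    calc (((H : Set G)).ncard : ℝ) * Real.exp (-(K/5))
        = Real.exp (Real.log (((H : Set G)).ncard : ℝ) - K/5) := by
          rw [sub_eq_add_neg, Real.exp_add, Real.exp_log hrm0]
      _ ≤ (N : ℝ) := h
  have hAm : (A.ncard : ℝ) ≤ Real.exp (K/5) * (((H : Set G)).ncard : ℝ) := by
    have h := Real.exp_le_exp.2 (show Real.log (A.ncard : ℝ)
        ≤ Real.log (((H : Set G)).ncard : ℝ) + K/5 by linarith)
    rw [Real.exp_log hrA0, Real.exp_add, Real.exp_log hrm0] at h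
    linarith
  -- elementary exponential estimates
  have hK5 : K / 5 ≤ 1 / 5 := by linarith
  have hexp1 : 1 - Real.exp (-(K/5)) ≤ K / 5 := by
    have := Real.add_one_le_exp (-(K/5))
    linarith
  have hexp2 : Real.exp (K/5) ≤ 5 / 4 := by
    have h1 : 1 - K/5 ≤ Real.exp (-(K/5)) := by
      have := Real.add_one_le_exp (-(K/5))
      linarith
    have h2 : Real.exp (K/5) * Real.exp (-(K/5)) = 1 := by
      rw [← Real.exp_add]; simp
    have h4 : (4:ℝ)/5 ≤ Real.exp (-(K/5)) := by linarith
    nlinarith [Real.exp_pos (K/5)]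
  -- the coset and symmetric difference
  refine ⟨H, a₀, hHfin, ?_⟩
  set C : Set G := (H : Set G) + ({a₀} : Set G) with hCdef
  have hCimg : C = (fun h => h + a₀) '' (H : Set G) := by
    rw [hCdef, Set.add_singleton]
  have hCfin : C.Finite := by rw [hCimg]; exact hHfin.image _
  have hCcard : C.ncard = (H : Set G).ncard := by
    rw [hCimg, Set.ncard_image_of_injective _ (add_left_injective a₀)]
  have hACeq : A ∩ C = A ∩ {x | a₀ - x ∈ (H : Set G)} := by
    ext x
    simp only [Set.mem_inter_iff, hCimg, Set.mem_image, Set.mem_setOf_eq, and_congr_right_iff]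
    intro _
    constructor
    · rintro ⟨h, hh, rfl⟩
      have he : a₀ - (h + a₀) = -h := by abel
      rw [he]
      exact H.neg_mem hh
    · intro hx
      exact ⟨-(a₀ - x), H.neg_mem hx, by abel⟩
  have hACn : (A ∩ C).ncard = N := by rw [hACeq]
  have hNA' : N ≤ A.ncard := by rw [hNdef]; exact hFA a₀
  have hNm' : N ≤ (H : Set G).ncard := by rw [hNdef]; exact hFH a₀
  have hdiff1 : (A \ C).ncard = A.ncard - N := by
    rw [← Set.diff_self_inter, Set.ncard_diff Set.inter_subset_left (hA.inter_of_left C), hACn]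
  have hdiff2 : (C \ A).ncard = (H : Set G).ncard - N := by
    rw [← Set.diff_self_inter, Set.ncard_diff Set.inter_subset_left (hCfin.inter_of_left A),
      Set.inter_comm, hACn, hCcard]
  have hsd : (A ∆ C).ncard = (A \ C).ncard + (C \ A).ncard := by
    rw [Set.symmDiff_def, Set.ncard_union_eq disjoint_sdiff_sdiff
      (hA.diff : (A \ C).Finite) (hCfin.diff : (C \ A).Finite)]
  have hcast : ((A ∆ C).ncard : ℝ)
      = ((A.ncard : ℝ) - (N : ℝ)) + ((((H : Set G)).ncard : ℝ) - (N : ℝ)) := by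
    rw [hsd, hdiff1, hdiff2]
    push_cast [Nat.cast_sub hNA', Nat.cast_sub hNm']
    ring
  rw [hcast]
  -- final numeric estimate
  have e1 : (A.ncard : ℝ) * (1 - Real.exp (-(K/5)))
      = (A.ncard : ℝ) - (A.ncard : ℝ) * Real.exp (-(K/5)) := by ring
  have s1 : (A.ncard : ℝ) - (N : ℝ) ≤ (A.ncard : ℝ) * (K/5) := by
    have h := mul_le_mul_of_nonneg_left hexp1 hrA0.le
    linarith
  have s2 : (((H : Set G)).ncard : ℝ) - (N : ℝ) ≤ (((H : Set G)).ncard : ℝ) * (K/5) := by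
    have h := mul_le_mul_of_nonneg_left hexp1 hrm0.le
    nlinarith
  have s3 : (A.ncard : ℝ) * (K/5) ≤ (5/4) * (((H : Set G)).ncard : ℝ) * (K/5) := by
    have h1 : (A.ncard : ℝ) ≤ (5/4) * (((H : Set G)).ncard : ℝ) := by
      have := mul_le_mul_of_nonneg_right hexp2 hrm0.le
      linarith
    have := mul_le_mul_of_nonneg_right h1 (by positivity : (0:ℝ) ≤ K/5)
    linarith
  have efin : (5/4) * (((H : Set G)).ncard : ℝ) * (K/5) + (((H : Set G)).ncard : ℝ) * (K/5)
      ≤ K * (((H : Set G)).ncard : ℝ) := by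
    have h0 : 0 ≤ K * (((H : Set G)).ncard : ℝ) := mul_nonneg hK0.le hrm0.le
    nlinarith
  linarith
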